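/- Let X be a real Banach space that is an M-ideal in its bidual, i.e., with ι_X : X → X** and ι_{X*} : X* → X*** the canonical isometric embeddings and, for F ∈ X***, πF := ι_{X*}(F ∘ ι_X), one has ‖F‖ = ‖πF‖ + ‖F − πF‖ for every F ∈ X***. Then every closed subspace Y of X is an M-ideal in its bidual: with ι_Y : Y → Y**, ι_{Y*} : Y* → Y***, and π_Y G := ι_{Y*}(G ∘ ι_Y) for G ∈ Y***, one has ‖G‖ = ‖π_Y G‖ + ‖G − π_Y G‖ for every G ∈ Y***. -/

import Mathlib

noncomputable section

namespace NormedSpace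

/-- The topological dual of a seminormed space `E`, as `NormedSpace.Dual` was defined in the
older Mathlib (with its own norm instances); Mathlib has replaced it by `StrongDual`. -/
abbrev Dual (𝕜 : Type*) [NontriviallyNormedField 𝕜] (E : Type*) [SeminormedAddCommGroup E]
    [NormedSpace 𝕜 E] : Type _ :=
  E →L[𝕜] 𝕜

instance instSeminormedAddCommGroupDual (𝕜 : Type*) [NontriviallyNormedField 𝕜] (E : Type*)
    [SeminormedAddCommGroup E] [NormedSpace 𝕜 E] : SeminormedAddCommGroup (Dual 𝕜 E) :=
  ContinuousLinearMap.toSeminormedAddCommGroup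

instance instNormedSpaceDual (𝕜 : Type*) [NontriviallyNormedField 𝕜] (E : Type*)
    [SeminormedAddCommGroup E] [NormedSpace 𝕜 E] : NormedSpace 𝕜 (Dual 𝕜 E) :=
  ContinuousLinearMap.toNormedSpace

instance instFunLikeDual (𝕜 : Type*) [NontriviallyNormedField 𝕜] (E : Type*)
    [SeminormedAddCommGroup E] [NormedSpace 𝕜 E] : FunLike (Dual 𝕜 E) E 𝕜 :=
  ContinuousLinearMap.funLike

end NormedSpace

end


open NormedSpace ContinuousLinearMap

section Aux

variable (X : Type) [NormedAddCommGroup X] [NormedSpace ℝ X] (Y : Subspace ℝ X)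

/-- transpose of the inclusion `Y → X`, i.e. restriction map `X* → Y*`. -/
noncomputable def mIdealTmap : Dual ℝ X →L[ℝ] Dual ℝ Y :=
  (ContinuousLinearMap.compL ℝ Y X ℝ).flip Y.subtypeL

/-- second transpose: `Y** → X**`. -/
noncomputable def mIdealJmap : Dual ℝ (Dual ℝ Y) →L[ℝ] Dual ℝ (Dual ℝ X) :=
  (ContinuousLinearMap.compL ℝ (Dual ℝ X) (Dual ℝ Y) ℝ).flip (mIdealTmap X Y)

lemma mIdealTmap_apply (f : Dual ℝ X) (y : Y) : mIdealTmap X Y f y = f y := rfl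

lemma mIdealJmap_apply (g : Dual ℝ (Dual ℝ Y)) (f : Dual ℝ X) :
    mIdealJmap X Y g f = g (mIdealTmap X Y f) := rfl

lemma mIdealTmap_norm_le : ‖mIdealTmap X Y‖ ≤ 1 := by
  refine opNorm_le_bound _ zero_le_one fun f => ?_
  rw [one_mul]
  calc ‖mIdealTmap X Y f‖ = ‖f.comp Y.subtypeL‖ := rfl
    _ ≤ ‖f‖ * ‖Y.subtypeL‖ := opNorm_comp_le _ _
    _ ≤ ‖f‖ * 1 := by gcongr; exact Submodule.norm_subtypeL_le Y
    _ = ‖f‖ := mul_one _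

lemma mIdealJmap_isometry (g : Dual ℝ (Dual ℝ Y)) : ‖mIdealJmap X Y g‖ = ‖g‖ := by
  refine le_antisymm ?_ ?_
  · calc ‖mIdealJmap X Y g‖ = ‖g.comp (mIdealTmap X Y)‖ := rfl
      _ ≤ ‖g‖ * ‖mIdealTmap X Y‖ := opNorm_comp_le _ _
      _ ≤ ‖g‖ * 1 := by gcongr; exact mIdealTmap_norm_le X Y
      _ = ‖g‖ := mul_one _
  · refine opNorm_le_bound _ (norm_nonneg _) fun p => ?_
    -- extend p : Dual ℝ Y to x* : Dual ℝ X with equal norm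
    obtain ⟨q, hq, hnorm⟩ := exists_extension_norm_eq Y p
    have ht : mIdealTmap X Y q = p := by
      ext y; exact hq y
    calc ‖g p‖ = ‖mIdealJmap X Y g q‖ := by rw [mIdealJmap_apply, ht]
      _ ≤ ‖mIdealJmap X Y g‖ * ‖q‖ := le_opNorm _ _
      _ = ‖mIdealJmap X Y g‖ * ‖p‖ := by rw [hnorm]

/-- Hahn–Banach extension along the isometric embedding `Y** → X**`. -/
lemma mIdeal_exists_extension (G : Dual ℝ (Dual ℝ (Dual ℝ Y))) :
    ∃ F : Dual ℝ (Dual ℝ (Dual ℝ X)),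
      (∀ g : Dual ℝ (Dual ℝ Y), F (mIdealJmap X Y g) = G g) ∧ ‖F‖ = ‖G‖ := by
  set J := mIdealJmap X Y
  have hinj : Function.Injective J := by
    intro a b hab
    have : ‖J (a - b)‖ = 0 := by rw [map_sub, hab, sub_self, norm_zero]
    rw [mIdealJmap_isometry] at this
    exact sub_eq_zero.mp (norm_eq_zero.mp this)
  set p : Subspace ℝ (Dual ℝ (Dual ℝ X)) := LinearMap.range (J.toLinearMap)
  set e := LinearEquiv.ofInjective (J.toLinearMap) hinj
  have he : ∀ g, (e g : Dual ℝ (Dual ℝ X)) = J g := fun g => rfl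
  have hez : ∀ z : p, ‖z‖ = ‖e.symm z‖ := by
    intro z
    have h1 := he (e.symm z)
    rw [e.apply_symm_apply] at h1
    calc ‖z‖ = ‖(z : Dual ℝ (Dual ℝ X))‖ := rfl
      _ = ‖J (e.symm z)‖ := by rw [h1]
      _ = ‖e.symm z‖ := mIdealJmap_isometry X Y _
  set f₀ : p →ₗ[ℝ] ℝ := G.toLinearMap ∘ₗ (e.symm : p →ₗ[ℝ] _)
  have hf₀ : ∀ z : p, ‖f₀ z‖ ≤ ‖G‖ * ‖z‖ := by
    intro z
    have : f₀ z = G (e.symm z) := rfl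
    rw [this, hez z]
    exact le_opNorm _ _
  set f : p →L[ℝ] ℝ := f₀.mkContinuous ‖G‖ hf₀
  have hfle : ‖f‖ ≤ ‖G‖ := LinearMap.mkContinuous_norm_le _ (norm_nonneg _) _
  have hfJ : ∀ g, f ⟨J g, ⟨g, rfl⟩⟩ = G g := by
    intro g
    show f₀ ⟨J g, ⟨g, rfl⟩⟩ = G g
    have : (⟨J g, ⟨g, rfl⟩⟩ : p) = e g := rfl
    rw [this]
    show G (e.symm (e g)) = G g
    rw [e.symm_apply_apply]
  have hfge : ‖G‖ ≤ ‖f‖ := by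
    refine opNorm_le_bound _ (norm_nonneg f) fun g => ?_
    calc ‖G g‖ = ‖f ⟨J g, ⟨g, rfl⟩⟩‖ := by rw [hfJ]
      _ ≤ ‖f‖ * ‖(⟨J g, ⟨g, rfl⟩⟩ : p)‖ := le_opNorm _ _
      _ = ‖f‖ * ‖J g‖ := rfl
      _ = ‖f‖ * ‖g‖ := by rw [mIdealJmap_isometry]
  obtain ⟨F, hF, hFnorm⟩ := exists_extension_norm_eq p f
  refine ⟨F, fun g => ?_, by rw [hFnorm]; exact le_antisymm hfle hfge⟩
  have := hF ⟨J g, ⟨g, rfl⟩⟩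
  rw [hfJ] at this
  exact this

end Aux

/-- If a real Banach space `X` is an M-ideal in its bidual, then so is every closed
subspace of `X`. -/
theorem closed_subspace_mIdeal_in_bidual
    (X : Type) [NormedAddCommGroup X] [NormedSpace ℝ X] [CompleteSpace X]
    (hM : ∀ F : Dual ℝ (Dual ℝ (Dual ℝ X)),
      ‖F‖ = ‖inclusionInDoubleDual ℝ (Dual ℝ X) (F.comp (inclusionInDoubleDual ℝ X))‖ +
        ‖F - inclusionInDoubleDual ℝ (Dual ℝ X) (F.comp (inclusionInDoubleDual ℝ X))‖)
    (Y : Subspace ℝ X) (hY : IsClosed (Y : Set X)) :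
    ∀ G : Dual ℝ (Dual ℝ (Dual ℝ Y)),
      ‖G‖ = ‖inclusionInDoubleDual ℝ (Dual ℝ Y) (G.comp (inclusionInDoubleDual ℝ Y))‖ +
        ‖G - inclusionInDoubleDual ℝ (Dual ℝ Y) (G.comp (inclusionInDoubleDual ℝ Y))‖ := by
  intro G
  set J := mIdealJmap X Y
  obtain ⟨F, hFJ, hFnorm⟩ := mIdeal_exists_extension X Y G
  set πF := inclusionInDoubleDual ℝ (Dual ℝ X) (F.comp (inclusionInDoubleDual ℝ X))
  set πG := inclusionInDoubleDual ℝ (Dual ℝ Y) (G.comp (inclusionInDoubleDual ℝ Y))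
  -- naturality : ι_X ∘ i = J ∘ ι_Y  (on elements)
  have hnat : ∀ y : Y, inclusionInDoubleDual ℝ X (y : X) = J (inclusionInDoubleDual ℝ Y y) := by
    intro y; ext f; rfl
  -- key identity: πG = πF ∘ J
  have hπ : πG = πF.comp J := by
    ext g
    show (g : Dual ℝ (Dual ℝ Y)) (G.comp (inclusionInDoubleDual ℝ Y)) =
      (J g) (F.comp (inclusionInDoubleDual ℝ X))
    rw [mIdealJmap_apply]
    congr 1
    ext y
    show G (inclusionInDoubleDual ℝ Y y) = F (inclusionInDoubleDual ℝ X (y : X))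
    rw [hnat y, hFJ]
  have hπ' : G - πG = (F - πF).comp J := by
    rw [hπ]
    ext g
    show G g - (πF.comp J) g = (F - πF) (J g)
    rw [← hFJ g]
    simp [sub_apply]
    rfl
  refine le_antisymm ?_ ?_
  · calc ‖G‖ = ‖πG + (G - πG)‖ := by rw [add_sub_cancel]
      _ ≤ ‖πG‖ + ‖G - πG‖ := norm_add_le _ _
  · have h1 : ‖πG‖ ≤ ‖πF‖ := by
      rw [hπ]
      calc ‖πF.comp J‖ ≤ ‖πF‖ * ‖J‖ := opNorm_comp_le _ _
        _ ≤ ‖πF‖ * 1 := by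
            gcongr
            refine opNorm_le_bound _ zero_le_one fun g => ?_
            rw [one_mul, mIdealJmap_isometry]
        _ = ‖πF‖ := mul_one _
    have h2 : ‖G - πG‖ ≤ ‖F - πF‖ := by
      rw [hπ']
      calc ‖(F - πF).comp J‖ ≤ ‖F - πF‖ * ‖J‖ := opNorm_comp_le _ _
        _ ≤ ‖F - πF‖ * 1 := by
            gcongr
            refine opNorm_le_bound _ zero_le_one fun g => ?_
            rw [one_mul, mIdealJmap_isometry]
        _ = ‖F - πF‖ := mul_one _
    calc ‖πG‖ + ‖G - πG‖ ≤ ‖πF‖ + ‖F - πF‖ := add_le_add h1 h2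
      _ = ‖F‖ := (hM F).symm
      _ = ‖G‖ := hFnorm
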